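/- Let 0 < D < 1 and W be the BSC(D). Let ȳ, ȳ' ∈ {0,1}^N, set z̄ = (ȳ ⊕ ȳ')H_n^{−1}, and suppose u₀^{i−1} = u'₀^{i−1} ⊕ z₀^{i−1}. Then for every a ∈ {0,1}: W^{(i)}(ȳ, u₀^{i−1} | a) = W^{(i)}(ȳ', u'₀^{i−1} | a ⊕ z_i). Consequently, the likelihood ratio l_i(ȳ, u₀^{i−1}) = W^{(i)}(ȳ,u₀^{i−1}|0)/W^{(i)}(ȳ,u₀^{i−1}|1) satisfies l_i(ȳ, u₀^{i−1}) = l_i(ȳ', u'₀^{i−1}) if z_i = 0 and l_i(ȳ, u₀^{i−1}) = 1/l_i(ȳ', u'₀^{i−1}) if z_i = 1. -/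

import Mathlib

open Finset

noncomputable section

/-- The polarization kernel `G₂ = [[1,0],[1,1]]` over GF(2). -/
def G2 : Matrix (Fin 2) (Fin 2) (ZMod 2) := !![1, 0; 1, 1]

/-- Index identification `Fin 2 × Fin (2^n) ≃ Fin (2^(n+1))`. -/
def finPowEquiv (n : ℕ) : Fin 2 × Fin (2 ^ n) ≃ Fin (2 ^ (n + 1)) :=
  finProdFinEquiv.trans (finCongr (by rw [pow_succ]; ring))

/-- The `n`-fold Kronecker power `G₂^{⊗n}` over GF(2). -/
def kronPow : (n : ℕ) → Matrix (Fin (2 ^ n)) (Fin (2 ^ n)) (ZMod 2)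
  | 0 => 1
  | n + 1 => Matrix.reindex (finPowEquiv n) (finPowEquiv n)
      (Matrix.kroneckerMap (· * ·) G2 (kronPow n))

/-- Reversal of the `n`-bit binary expansion of `i`. -/
def bitRevNat (n i : ℕ) : ℕ :=
  ∑ k ∈ Finset.range n, if Nat.testBit i (n - 1 - k) then 2 ^ k else 0

lemma sum_range_two_pow_lt (n : ℕ) : ∑ k ∈ Finset.range n, 2 ^ k < 2 ^ n := by
  induction n with
  | zero => simp
  | succ m ih => rw [Finset.sum_range_succ, pow_succ]; omega

lemma bitRevNat_lt (n i : ℕ) : bitRevNat n i < 2 ^ n := by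
  have h1 : bitRevNat n i ≤ ∑ k ∈ Finset.range n, 2 ^ k :=
    Finset.sum_le_sum (fun k _ => by split <;> simp)
  have h2 := sum_range_two_pow_lt n
  omega

/-- The bit-reversal permutation matrix `Aₙ`. -/
def bitRevMatrix (n : ℕ) : Matrix (Fin (2 ^ n)) (Fin (2 ^ n)) (ZMod 2) :=
  fun i j => if (j : ℕ) = bitRevNat n (i : ℕ) then 1 else 0

/-- The polar transform matrix `Hₙ = Aₙ G₂^{⊗n}`. -/
def polarH (n : ℕ) : Matrix (Fin (2 ^ n)) (Fin (2 ^ n)) (ZMod 2) :=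
  bitRevMatrix n * kronPow n

/-- BSC(D) transition probability `W(y∣x)`. -/
def bsc (D : ℝ) (y x : ZMod 2) : ℝ := if y = x then 1 - D else D

/-- The polar transform `x̄ = ū Hₙ` of a word `ū`. -/
def polarEnc (n : ℕ) (u : Fin (2 ^ n) → ZMod 2) : Fin (2 ^ n) → ZMod 2 :=
  Matrix.vecMul u (polarH n)

/-- `W^{(i)}(ȳ, u₀^{i−1} ∣ u_i)`; it depends on `u` only through coordinates `≤ i`,
the coordinates `> i` being summed out. -/
def Wi (D : ℝ) (n : ℕ) (y : Fin (2 ^ n) → ZMod 2) (i : Fin (2 ^ n))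
    (u : Fin (2 ^ n) → ZMod 2) : ℝ :=
  ((2 : ℝ) ^ (2 ^ n - 1))⁻¹ *
    ∑ v ∈ Finset.univ.filter (fun v : Fin (2 ^ n) → ZMod 2 => ∀ j, j ≤ i → v j = u j),
      ∏ j, bsc D (y j) (polarEnc n v j)

/-- The posterior `P(u_i ∣ u₀^{i−1}, ȳ)`. -/
def post (D : ℝ) (n : ℕ) (y : Fin (2 ^ n) → ZMod 2) (i : Fin (2 ^ n))
    (u : Fin (2 ^ n) → ZMod 2) : ℝ :=
  Wi D n y i u /
    (Wi D n y i (Function.update u i 0) + Wi D n y i (Function.update u i 1))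


lemma testBit_sum (f : ℕ → Bool) (n j : ℕ) :
    Nat.testBit (∑ k ∈ Finset.range n, if f k then 2 ^ k else 0) j
      = (decide (j < n) && f j) := by
  induction n with
  | zero => simp
  | succ m ih =>
    have hle : (∑ k ∈ Finset.range m, if f k then 2 ^ k else 0)
        ≤ ∑ k ∈ Finset.range m, 2 ^ k :=
      Finset.sum_le_sum (fun k _ => by split <;> simp)
    have hlt : (∑ k ∈ Finset.range m, if f k then 2 ^ k else 0) < 2 ^ m :=
      lt_of_le_of_lt hle (sum_range_two_pow_lt m)
    set S := ∑ k ∈ Finset.range m, if f k then 2 ^ k else 0 with hS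
    rw [Finset.sum_range_succ]
    by_cases hf : f m
    · simp only [hf, if_true]
      rcases lt_trichotomy j m with h | h | h
      · have e1 : (2:ℕ) ^ m = 2 ^ j * 2 ^ (m - j) := by rw [← pow_add]; congr 1; omega
        have e2 : (2:ℕ) ^ (m - j) = 2 * 2 ^ (m - j - 1) := by
          rw [← pow_succ']; congr 1; omega
        rw [Nat.testBit_eq_decide_div_mod_eq] at ih ⊢
        rw [e1, Nat.add_mul_div_left _ _ (Nat.two_pow_pos j), e2]
        have e3 : (S / 2 ^ j + 2 * 2 ^ (m - j - 1)) % 2 = S / 2 ^ j % 2 := by omega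
        rw [e3, ih]
        have : (decide (j < m)) = true := by simp [h]
        have : (decide (j < m + 1)) = true := by simp; omega
        simp_all
      · subst h
        rw [Nat.testBit_eq_decide_div_mod_eq, Nat.add_div_right _ (Nat.two_pow_pos j),
          Nat.div_eq_of_lt hlt]
        simp [hf]
      · have hb : S + 2 ^ m < 2 ^ j := by
          have h1 : S + 2 ^ m < 2 ^ (m + 1) := by rw [pow_succ]; omega
          exact lt_of_lt_of_le h1 (Nat.pow_le_pow_right (by norm_num) h)
        rw [Nat.testBit_lt_two_pow hb]
        have : ¬ (j < m + 1) := by omega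
        simp [this]
    · rw [if_neg hf, add_zero, ih]
      rcases lt_trichotomy j m with h | h | h
      · have h2 : j < m + 1 := by omega
        simp [h, h2]
      · subst h; simp [hf]
      · have h1 : ¬ (j < m) := by omega
        have h2 : ¬ (j < m + 1) := by omega
        simp [h1, h2]

lemma sum_testBit_mod (i n : ℕ) :
    (∑ k ∈ Finset.range n, if Nat.testBit i k then 2 ^ k else 0) = i % 2 ^ n := by
  induction n with
  | zero => simp [Nat.mod_one]
  | succ m ih =>
    rw [Finset.sum_range_succ, ih, pow_succ, Nat.mod_mul]
    have h1 : i / 2 ^ m % 2 = 0 ∨ i / 2 ^ m % 2 = 1 := by omega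
    rw [Nat.testBit_eq_decide_div_mod_eq]
    rcases h1 with h | h <;> simp [h]

lemma bitRevNat_bitRevNat (n i : ℕ) (h : i < 2 ^ n) :
    bitRevNat n (bitRevNat n i) = i := by
  unfold bitRevNat
  have key : ∀ k ∈ Finset.range n,
      (if Nat.testBit (∑ k ∈ Finset.range n,
          if Nat.testBit i (n - 1 - k) then 2 ^ k else 0) (n - 1 - k) then 2 ^ k else 0)
        = (if Nat.testBit i k then 2 ^ k else 0) := by
    intro k hk
    rw [Finset.mem_range] at hk
    rw [testBit_sum (fun k => Nat.testBit i (n - 1 - k))]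
    have h1 : n - 1 - k < n := by omega
    have h2 : n - 1 - (n - 1 - k) = k := by omega
    simp [h1, h2]
  rw [Finset.sum_congr rfl key, sum_testBit_mod, Nat.mod_eq_of_lt h]

lemma bitRevMatrix_mul_self (n : ℕ) : bitRevMatrix n * bitRevMatrix n = 1 := by
  ext i j
  have h1 : ∀ k : Fin (2 ^ n),
      ((k : ℕ) = bitRevNat n (i : ℕ)) ↔ k = (⟨bitRevNat n i, bitRevNat_lt n i⟩ : Fin (2 ^ n)) :=
    fun k => by simp [Fin.ext_iff]
  simp only [Matrix.mul_apply, bitRevMatrix, h1, ite_mul, one_mul, zero_mul]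
  rw [Finset.sum_ite_eq' Finset.univ (⟨bitRevNat n i, bitRevNat_lt n i⟩ : Fin (2 ^ n))]
  simp only [Finset.mem_univ, if_true]
  rw [Matrix.one_apply]
  simp [bitRevNat_bitRevNat n i i.isLt, Fin.ext_iff, eq_comm]

lemma det_kronPow (n : ℕ) : (kronPow n).det = 1 := by
  induction n with
  | zero => simp [kronPow]
  | succ m ih =>
    rw [kronPow, Matrix.det_reindex_self, Matrix.det_kronecker, ih]
    have hG : G2.det = 1 := by simp [G2, Matrix.det_fin_two_of]
    rw [hG]; simp

lemma isUnit_det_polarH (n : ℕ) : IsUnit (polarH n).det := by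
  rw [polarH, Matrix.det_mul, det_kronPow, mul_one]
  exact IsUnit.of_mul_eq_one _
    (by rw [← Matrix.det_mul, bitRevMatrix_mul_self, Matrix.det_one])

lemma vecMul_inv_cancel (n : ℕ) (w : Fin (2 ^ n) → ZMod 2) :
    Matrix.vecMul (Matrix.vecMul w (polarH n)⁻¹) (polarH n) = w := by
  rw [Matrix.vecMul_vecMul, Matrix.nonsing_inv_mul _ (isUnit_det_polarH n), Matrix.vecMul_one]

lemma bsc_gauge (D : ℝ) (a b x : ZMod 2) : bsc D a x = bsc D b (x + a + b) := by
  unfold bsc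
  have h : (a = x) ↔ (b = x + a + b) := by revert a b x; decide
  rw [if_congr h rfl rfl]

/-- **Gauge transformation.**  Let `z̄ = (ȳ ⊕ ȳ′)Hₙ⁻¹` and suppose the pasts are related by
`u₀^{i−1} = u′₀^{i−1} ⊕ z₀^{i−1}`.  Then `W^{(i)}(ȳ, u₀^{i−1} ∣ a) =
W^{(i)}(ȳ′, u′₀^{i−1} ∣ a ⊕ z_i)` for every input `a`; consequently the likelihood ratio is
preserved if `z_i = 0` and inverted if `z_i = 1`.  (The word supplied to `Wi` carries the
past in its coordinates `< i` and the channel input in coordinate `i`.) -/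
theorem gauge_transformation (D : ℝ) (hD0 : 0 < D) (hD1 : D < 1) (n : ℕ)
    (y y' u u' z : Fin (2 ^ n) → ZMod 2) (i : Fin (2 ^ n))
    (hz : z = Matrix.vecMul (y + y') (polarH n)⁻¹)
    (hu : ∀ j, j < i → u j = u' j + z j) :
    (∀ a : ZMod 2,
        Wi D n y i (Function.update u i a) = Wi D n y' i (Function.update u' i (a + z i))) ∧
    (z i = 0 →
        Wi D n y i (Function.update u i 0) / Wi D n y i (Function.update u i 1)
          = Wi D n y' i (Function.update u' i 0) / Wi D n y' i (Function.update u' i 1)) ∧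
    (z i = 1 →
        Wi D n y i (Function.update u i 0) / Wi D n y i (Function.update u i 1)
          = (Wi D n y' i (Function.update u' i 0) / Wi D n y' i (Function.update u' i 1))⁻¹) := by
  have hzH : Matrix.vecMul z (polarH n) = y + y' := by
    rw [hz, vecMul_inv_cancel]
  have hzz : ∀ w : Fin (2 ^ n) → ZMod 2, w + z + z = w := by
    intro w; funext j
    show w j + z j + z j = w j
    rw [add_assoc, CharTwo.add_self_eq_zero, add_zero]
  have key : ∀ a : ZMod 2,
      Wi D n y i (Function.update u i a) = Wi D n y' i (Function.update u' i (a + z i)) := by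
    intro a
    unfold Wi
    congr 1
    refine Finset.sum_nbij' (fun v => v + z) (fun v => v + z) ?_ ?_ ?_ ?_ ?_
    · intro v hv
      simp only [Finset.mem_filter, Finset.mem_univ, true_and] at hv ⊢
      intro j hj
      rcases eq_or_lt_of_le hj with h | h
      · have hvi := hv i le_rfl
        rw [Function.update_self] at hvi
        show v j + z j = _
        rw [h, hvi, Function.update_self]
      · have hne : j ≠ i := ne_of_lt h
        have hvj := hv j hj
        rw [Function.update_of_ne hne] at hvj
        show v j + z j = _
        rw [Function.update_of_ne hne, hvj, hu j h, add_assoc,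
          CharTwo.add_self_eq_zero, add_zero]
    · intro v hv
      simp only [Finset.mem_filter, Finset.mem_univ, true_and] at hv ⊢
      intro j hj
      rcases eq_or_lt_of_le hj with h | h
      · have hvi := hv i le_rfl
        rw [Function.update_self] at hvi
        show v j + z j = _
        rw [h, hvi, Function.update_self, add_assoc, CharTwo.add_self_eq_zero, add_zero]
      · have hne : j ≠ i := ne_of_lt h
        have hvj := hv j hj
        rw [Function.update_of_ne hne] at hvj
        show v j + z j = _
        rw [Function.update_of_ne hne, hvj, hu j h]
    · intro v _; exact hzz v
    · intro v _; exact hzz v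
    · intro v _
      refine Finset.prod_congr rfl (fun j _ => ?_)
      have henc : polarEnc n (v + z) j = polarEnc n v j + y j + y' j := by
        simp only [polarEnc, Matrix.add_vecMul, hzH, Pi.add_apply, add_assoc]
      rw [henc, bsc_gauge D (y j) (y' j) (polarEnc n v j)]
  refine ⟨key, ?_, ?_⟩
  · intro h0
    rw [key 0, key 1, h0, add_zero, add_zero]
  · intro h1
    have e0 : (0 : ZMod 2) + 1 = 1 := by decide
    have e1 : (1 : ZMod 2) + 1 = 0 := by decide
    rw [key 0, key 1, h1, e0, e1, inv_div]


end
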